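/- With ι : H_red → H an isometric embedding, P the orthogonal projection onto ι[H_red], O a bounded self-adjoint operator on H, and O_red := ι⁻¹ ∘ P ∘ O ∘ ι: for every unit vector Ψ ∈ H_red, the fluctuations satisfy Δ_{ιΨ}(O) ≥ Δ_Ψ(O_red), with equality for all Ψ if and only if O preserves ι[H_red]. -/
import Mathlib


open scoped ComplexInnerProductSpace

/-- **Fluctuations do not increase under compression.**  With `ι : H_red → H` an
isometric embedding, `O` a bounded self-adjoint operator on `H`, and
`O_red` the compression of `O` to `H_red` (characterized by
`⟨ι Ψ₁, O ι Ψ₂⟩ = ⟨Ψ₁, O_red Ψ₂⟩`): for every unit vector `Ψ ∈ H_red`,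
`Δ_{ιΨ}(O) ≥ Δ_Ψ(O_red)`, with equality for all unit `Ψ` if and only if `O`
preserves `ι[H_red]`.  Here `Δ_Φ(A) = sqrt(⟨Φ, A²Φ⟩ − ⟨Φ, AΦ⟩²)`. -/
theorem statement15 {Hred H : Type*}
    [NormedAddCommGroup Hred] [InnerProductSpace ℂ Hred] [CompleteSpace Hred]
    [NormedAddCommGroup H] [InnerProductSpace ℂ H] [CompleteSpace H]
    (ι : Hred →ₗᵢ[ℂ] H)
    (O : H →L[ℂ] H) (hOsa : IsSelfAdjoint O)
    (Ored : Hred →L[ℂ] Hred)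
    (hOred : ∀ Ψ1 Ψ2 : Hred, ⟪ι Ψ1, O (ι Ψ2)⟫ = ⟪Ψ1, Ored Ψ2⟫) :
    (∀ Ψ : Hred, ‖Ψ‖ = 1 →
      Real.sqrt ((⟪ι Ψ, O (O (ι Ψ))⟫).re - ((⟪ι Ψ, O (ι Ψ)⟫).re) ^ 2)
        ≥ Real.sqrt ((⟪Ψ, Ored (Ored Ψ)⟫).re - ((⟪Ψ, Ored Ψ⟫).re) ^ 2))
    ∧ ((∀ Ψ : Hred, ‖Ψ‖ = 1 →
        Real.sqrt ((⟪ι Ψ, O (O (ι Ψ))⟫).re - ((⟪ι Ψ, O (ι Ψ)⟫).re) ^ 2)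
          = Real.sqrt ((⟪Ψ, Ored (Ored Ψ)⟫).re - ((⟪Ψ, Ored Ψ⟫).re) ^ 2))
      ↔ ∀ u ∈ LinearMap.range ι.toLinearMap, O u ∈ LinearMap.range ι.toLinearMap) := by
  -- O is symmetric
  have hO' : ∀ x y : H, ⟪x, O y⟫ = ⟪O x, y⟫ := by
    intro x y
    conv_lhs => rw [← hOsa.adjoint_eq]
    exact ContinuousLinearMap.adjoint_inner_right O x y
  -- Ored is symmetric
  have hOred' : ∀ ψ φ : Hred, ⟪ψ, Ored φ⟫ = ⟪Ored ψ, φ⟫ := by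
    intro ψ φ
    calc ⟪ψ, Ored φ⟫ = ⟪ι ψ, O (ι φ)⟫ := (hOred ψ φ).symm
      _ = ⟪O (ι ψ), ι φ⟫ := hO' _ _
      _ = (starRingEnd ℂ) ⟪ι φ, O (ι ψ)⟫ := (inner_conj_symm _ _).symm
      _ = (starRingEnd ℂ) ⟪φ, Ored ψ⟫ := by rw [hOred]
      _ = ⟪Ored ψ, φ⟫ := inner_conj_symm _ _
  have hnormsq : ∀ x : H, (⟪x, x⟫).re = ‖x‖ ^ 2 := by
    intro x; rw [inner_self_eq_norm_sq_to_K]; norm_cast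
  have hnormsqr : ∀ x : Hred, (⟪x, x⟫).re = ‖x‖ ^ 2 := by
    intro x; rw [inner_self_eq_norm_sq_to_K]; norm_cast
  -- second moments as norms squared
  have hsec : ∀ Ψ : Hred, (⟪ι Ψ, O (O (ι Ψ))⟫).re = ‖O (ι Ψ)‖ ^ 2 := by
    intro Ψ; rw [hO' (ι Ψ) (O (ι Ψ)), hnormsq]
  have hsecr : ∀ Ψ : Hred, (⟪Ψ, Ored (Ored Ψ)⟫).re = ‖Ored Ψ‖ ^ 2 := by
    intro Ψ; rw [hOred' Ψ (Ored Ψ), hnormsqr]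
  -- the compression does not increase the norm
  have hle : ∀ Ψ : Hred, ‖Ored Ψ‖ ≤ ‖O (ι Ψ)‖ := by
    intro Ψ
    have h1 : ‖Ored Ψ‖ ^ 2 = (⟪ι (Ored Ψ), O (ι Ψ)⟫).re := by
      rw [hOred (Ored Ψ) Ψ, hnormsqr]
    have h2 : (⟪ι (Ored Ψ), O (ι Ψ)⟫).re ≤ ‖Ored Ψ‖ * ‖O (ι Ψ)‖ := by
      calc (⟪ι (Ored Ψ), O (ι Ψ)⟫).re ≤ ‖⟪ι (Ored Ψ), O (ι Ψ)⟫‖ :=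
            Complex.re_le_norm _
        _ ≤ ‖ι (Ored Ψ)‖ * ‖O (ι Ψ)‖ := norm_inner_le_norm _ _
        _ = ‖Ored Ψ‖ * ‖O (ι Ψ)‖ := by rw [ι.norm_map]
    rcases eq_or_lt_of_le (norm_nonneg (Ored Ψ)) with h0 | h0
    · rw [← h0]; exact norm_nonneg _
    · nlinarith
  -- first moments agree
  have hfst : ∀ Ψ : Hred, (⟪ι Ψ, O (ι Ψ)⟫).re = (⟪Ψ, Ored Ψ⟫).re := by
    intro Ψ; rw [hOred]
  -- Cauchy-Schwarz bound on the first moment for unit vectors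
  have hcs : ∀ Ψ : Hred, ‖Ψ‖ = 1 → ((⟪Ψ, Ored Ψ⟫).re) ^ 2 ≤ ‖Ored Ψ‖ ^ 2 := by
    intro Ψ hΨ
    have h1 : |(⟪Ψ, Ored Ψ⟫).re| ≤ ‖⟪Ψ, Ored Ψ⟫‖ := Complex.abs_re_le_norm _
    have h2 : ‖⟪Ψ, Ored Ψ⟫‖ ≤ ‖Ψ‖ * ‖Ored Ψ‖ := norm_inner_le_norm _ _
    rw [hΨ, one_mul] at h2
    nlinarith [abs_nonneg ((⟪Ψ, Ored Ψ⟫).re), sq_abs ((⟪Ψ, Ored Ψ⟫).re)]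
  -- if the norms agree, then O (ι Ψ) lies in the range of ι
  have hkey : ∀ Ψ : Hred, ‖O (ι Ψ)‖ ^ 2 = ‖Ored Ψ‖ ^ 2 → O (ι Ψ) = ι (Ored Ψ) := by
    intro Ψ hΨ
    have hz : ‖O (ι Ψ) - ι (Ored Ψ)‖ ^ 2 = 0 := by
      have hre : (⟪O (ι Ψ), ι (Ored Ψ)⟫).re = ‖Ored Ψ‖ ^ 2 := by
        rw [← inner_conj_symm (O (ι Ψ)) (ι (Ored Ψ)), Complex.conj_re,
          hOred (Ored Ψ) Ψ, hnormsqr]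
      have hns := @norm_sub_sq ℂ H _ _ _ (O (ι Ψ)) (ι (Ored Ψ))
      simp only [RCLike.re_to_complex] at hns
      rw [hns, hre, ι.norm_map, hΨ]
      ring
    have := pow_eq_zero_iff (n := 2) (by norm_num) |>.mp hz
    rw [norm_eq_zero, sub_eq_zero] at this
    exact this
  constructor
  · intro Ψ hΨ
    apply Real.sqrt_le_sqrt
    rw [hsec, hsecr, hfst]
    have := hle Ψ
    nlinarith [norm_nonneg (Ored Ψ), norm_nonneg (O (ι Ψ))]
  · constructor
    · -- equality for all unit vectors implies O preserves the range
      intro heq u hu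
      obtain ⟨Ψ, rfl⟩ := hu
      rcases eq_or_ne Ψ 0 with rfl | hΨ0
      · refine ⟨0, ?_⟩
        simp
      · set c : ℝ := ‖Ψ‖ with hc
        have hcpos : 0 < c := norm_pos_iff.mpr hΨ0
        set u' : Hred := (c⁻¹ : ℂ) • Ψ with hu'
        have hu'1 : ‖u'‖ = 1 := by
          rw [hu', norm_smul]
          simp [hc]
          field_simp
        have he := heq u' hu'1
        rw [hsec, hsecr, hfst] at he
        have hge : ‖Ored u'‖ ^ 2 ≤ ‖O (ι u')‖ ^ 2 := by
          have := hle u'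
          nlinarith [norm_nonneg (Ored u'), norm_nonneg (O (ι u'))]
        have hcs' := hcs u' hu'1
        have hne : ‖O (ι u')‖ ^ 2 = ‖Ored u'‖ ^ 2 := by
          have h1 : 0 ≤ ‖Ored u'‖ ^ 2 - ((⟪u', Ored u'⟫).re) ^ 2 := by linarith
          have h2 : 0 ≤ ‖O (ι u')‖ ^ 2 - ((⟪u', Ored u'⟫).re) ^ 2 := by linarith
          have := (Real.sqrt_inj h2 h1).mp he
          linarith
        have hOu' := hkey u' hne
        have hne0 : (c : ℂ) ≠ 0 := by exact_mod_cast hcpos.ne'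
        simp only [hu', map_smul, LinearIsometry.map_smul] at hOu'
        have hfin := smul_right_injective H (inv_ne_zero hne0) hOu'
        exact ⟨Ored Ψ, hfin.symm⟩
    · -- O preserves the range implies equality
      intro hpres Ψ hΨ
      obtain ⟨φ, hφ⟩ := hpres (ι Ψ) ⟨Ψ, rfl⟩
      have hφ' : Ored Ψ = φ := by
        apply ext_inner_left ℂ
        intro v
        rw [← hOred v Ψ]
        show ⟪ι v, O (ι Ψ)⟫ = ⟪v, φ⟫
        rw [← hφ]
        exact ι.inner_map_map v φ
      have hn : ‖O (ι Ψ)‖ = ‖Ored Ψ‖ := by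
        rw [← hφ, hφ']
        show ‖ι φ‖ = ‖φ‖
        exact ι.norm_map φ
      rw [hsec, hsecr, hfst, hn]
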